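/- Fix an integer n′ ≥ 2 and β ∈ (0, 1), set a_k := exp(2πik/n′) and b_k := exp(2πi(k+β)/n′) for k = 1, …, n′, and define the polynomial W̃_β′(z) := [∏_{k=1}^{n′−1} (2 sin(πk/n′))⁻¹] · ∏_{k=1}^{n′} [(z − a_k)(z − b_k) / (2 sin(π(k+β)/n′))]. Then at every zero ξ of W̃_β′ (i.e., at each ξ ∈ {a₁, …, a_{n′}, b₁, …, b_{n′}}) one has |d/dz W̃_β′(ξ)| = 1; that is, the superpotential W̃_β with derivative W̃_β′ satisfies the unit mass condition |W̃_β″| = 1 at each critical point. -/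

import Mathlib

open Polynomial

open Complex Finset

set_option maxHeartbeats 1000000

lemma UMC_absG (y : ℝ) : ‖(1 - Complex.exp ((y:ℂ) * Complex.I))‖ = |2 * Real.sin (y/2)| := by
  rw [Complex.exp_mul_I]
  have hre : (1 - (Complex.cos y + Complex.sin y * Complex.I)).re = 1 - Real.cos y := by
    simp [← Complex.ofReal_sin, ← Complex.ofReal_cos]
  have him : (1 - (Complex.cos y + Complex.sin y * Complex.I)).im = - Real.sin y := by
    simp [Complex.sin_ofReal_re]
  rw [Complex.norm_def, Complex.normSq_apply, hre, him]
  have h1 : |Real.sin (y/2)| = Real.sqrt ((1 - Real.cos y)/2) := Real.abs_sin_half y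
  have h2 : Real.sin y ^ 2 + Real.cos y ^ 2 = 1 := Real.sin_sq_add_cos_sq y
  have key : (1 - Real.cos y) * (1 - Real.cos y) + (- Real.sin y) * (- Real.sin y)
      = (2 * |Real.sin (y/2)|)^2 := by
    rw [h1]
    rw [mul_pow, Real.sq_sqrt (by nlinarith [Real.cos_le_one y])]
    nlinarith
  rw [key, Real.sqrt_sq_eq_abs, _root_.abs_of_nonneg (by positivity), abs_mul, _root_.abs_two]

lemma UMC_absA (n' : ℕ) (x : ℝ) :
    ‖(1 - Complex.exp (2 * (Real.pi : ℂ) * Complex.I * (x : ℂ) / (n' : ℂ)))‖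
      = |2 * Real.sin (Real.pi * x / n')| := by
  have h : 2 * (Real.pi : ℂ) * Complex.I * (x : ℂ) / (n' : ℂ)
      = ((2 * Real.pi * x / n' : ℝ) : ℂ) * Complex.I := by push_cast; ring
  rw [h, UMC_absG]
  congr 2
  ring_nf

lemma UMC_absA_nat (n' k : ℕ) :
    ‖(1 - Complex.exp (2 * (Real.pi : ℂ) * Complex.I * (k : ℂ) / (n' : ℂ)))‖
      = |2 * Real.sin (Real.pi * k / n')| := by
  have := UMC_absA n' (k : ℝ)
  simpa using this

lemma UMC_absB_nat (n' k : ℕ) (β : ℝ) :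
    ‖(1 - Complex.exp (2 * (Real.pi : ℂ) * Complex.I * ((k : ℂ) + (β : ℂ)) / (n' : ℂ)))‖
      = |2 * Real.sin (Real.pi * (k + β) / n')| := by
  have := UMC_absA n' ((k : ℝ) + β)
  simpa using this

/-- The polynomial
`W̃_β′(z) = [∏_{k=1}^{n′−1}(2 sin(πk/n′))⁻¹] · ∏_{k=1}^{n′} (z−a_k)(z−b_k)/(2 sin(π(k+β)/n′))`
with `a_k = exp(2πik/n′)`, `b_k = exp(2πi(k+β)/n′)`. -/
noncomputable def JWsuperpotentialDeriv (n' : ℕ) (β : ℝ) : Polynomial ℂ :=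
  C ((((∏ k ∈ Finset.Icc 1 (n' - 1), (2 * Real.sin (Real.pi * k / n'))⁻¹) : ℝ) : ℂ) *
      (((∏ k ∈ Finset.Icc 1 n', (2 * Real.sin (Real.pi * (k + β) / n'))⁻¹) : ℝ) : ℂ)) *
    ∏ k ∈ Finset.Icc 1 n',
      ((X - C (Complex.exp (2 * (Real.pi : ℂ) * Complex.I * (k : ℂ) / (n' : ℂ)))) *
       (X - C (Complex.exp
          (2 * (Real.pi : ℂ) * Complex.I * ((k : ℂ) + (β : ℂ)) / (n' : ℂ)))))

/-- For `n′ ≥ 2` and `β ∈ (0, 1)`, at every zero `ξ` of `W̃_β′`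
(i.e. at each `ξ ∈ {a₁, …, a_{n′}, b₁, …, b_{n′}}`) one has `|d/dz W̃_β′(ξ)| = 1`:
the superpotential satisfies the unit mass condition at each critical point. -/
theorem unit_mass_condition (n' : ℕ) (hn : 2 ≤ n') (β : ℝ)
    (hβ : β ∈ Set.Ioo (0 : ℝ) 1) :
    ∀ k ∈ Finset.Icc 1 n',
      ‖((derivative (JWsuperpotentialDeriv n' β)).eval
        (Complex.exp (2 * (Real.pi : ℂ) * Complex.I * (k : ℂ) / (n' : ℂ))))‖ = 1 ∧
      ‖((derivative (JWsuperpotentialDeriv n' β)).eval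
        (Complex.exp
          (2 * (Real.pi : ℂ) * Complex.I * ((k : ℂ) + (β : ℂ)) / (n' : ℂ))))‖ = 1 := by
  obtain ⟨hβ0, hβ1⟩ := hβ
  have hn0 : n' ≠ 0 := by omega
  have hnpos : 0 < n' := by omega
  have hnc : (n' : ℂ) ≠ 0 := Nat.cast_ne_zero.mpr hn0
  set ζ : ℂ := Complex.exp (2 * (Real.pi : ℂ) * Complex.I / n') with hζdef
  have hζ : IsPrimitiveRoot ζ n' := Complex.isPrimitiveRoot_exp n' hn0
  set a : ℕ → ℂ := fun k => Complex.exp (2 * (Real.pi : ℂ) * Complex.I * (k : ℂ) / (n' : ℂ))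
    with ha
  set b : ℕ → ℂ :=
    fun k => Complex.exp (2 * (Real.pi : ℂ) * Complex.I * ((k : ℂ) + (β : ℂ)) / (n' : ℂ)) with hb
  set η : ℂ := Complex.exp (2 * (Real.pi : ℂ) * Complex.I * (β : ℂ) / n') with hη
  set ω : ℂ := Complex.exp (2 * (Real.pi : ℂ) * Complex.I * (β : ℂ)) with hω
  set c1 : ℝ := ∏ k ∈ Finset.Icc 1 (n' - 1), (2 * Real.sin (Real.pi * k / n'))⁻¹ with hc1
  set c2 : ℝ := ∏ k ∈ Finset.Icc 1 n', (2 * Real.sin (Real.pi * (k + β) / n'))⁻¹ with hc2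
  -- reindexing of Icc 1 n'
  have hIcc : Finset.Icc 1 n' = Finset.map ⟨fun i => i + 1, add_left_injective 1⟩
      (Finset.range n') := by
    ext x
    simp only [Finset.mem_Icc, Finset.mem_map, Finset.mem_range, Function.Embedding.coeFn_mk]
    constructor
    · intro h; exact ⟨x - 1, by omega, by omega⟩
    · rintro ⟨y, hy, rfl⟩; omega
  have hak : ∀ i : ℕ, a (i + 1) = ζ ^ i * ζ := by
    intro i
    simp only [ha, hζdef, ← Complex.exp_nat_mul, ← Complex.exp_add]
    congr 1
    push_cast
    ring
  have hbk : ∀ i : ℕ, b (i + 1) = ζ ^ i * (ζ * η) := by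
    intro i
    simp only [hb, hζdef, hη, ← Complex.exp_nat_mul, ← Complex.exp_add]
    congr 1
    push_cast
    ring
  have hαω : (ζ * η) ^ n' = ω := by
    rw [hζdef, hη, hω, ← Complex.exp_add, ← Complex.exp_nat_mul]
    have e : (n' : ℂ) * (2 * (Real.pi : ℂ) * Complex.I / n'
        + 2 * (Real.pi : ℂ) * Complex.I * (β : ℂ) / n')
        = 2 * (Real.pi : ℂ) * Complex.I + 2 * (Real.pi : ℂ) * Complex.I * (β : ℂ) := by
      field_simp
    rw [e, Complex.exp_add, Complex.exp_two_pi_mul_I, one_mul]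
  have hA : ∏ k ∈ Finset.Icc 1 n', (X - C (a k)) = X ^ n' - C 1 := by
    rw [X_pow_sub_C_eq_prod hζ hnpos hζ.pow_eq_one, hIcc, Finset.prod_map]
    exact Finset.prod_congr rfl fun i _ => by rw [Function.Embedding.coeFn_mk, hak]
  have hB : ∏ k ∈ Finset.Icc 1 n', (X - C (b k)) = X ^ n' - C ω := by
    rw [X_pow_sub_C_eq_prod hζ hnpos hαω, hIcc, Finset.prod_map]
    exact Finset.prod_congr rfl fun i _ => by rw [Function.Embedding.coeFn_mk, hbk]
  have hJW : JWsuperpotentialDeriv n' β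
      = C ((c1 : ℂ) * (c2 : ℂ)) * ((X ^ n' - C 1) * (X ^ n' - C ω)) := by
    rw [JWsuperpotentialDeriv, Finset.prod_mul_distrib, hA, hB]
  have heval : ∀ ξ : ℂ, (derivative (JWsuperpotentialDeriv n' β)).eval ξ =
      ((c1 : ℂ) * (c2 : ℂ)) *
        ((n' : ℂ) * ξ ^ (n' - 1) * (ξ ^ n' - ω) + (ξ ^ n' - 1) * ((n' : ℂ) * ξ ^ (n' - 1))) := by
    intro ξ
    rw [hJW]
    simp only [derivative_mul, derivative_C, derivative_sub, derivative_X_pow, zero_mul,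
      mul_zero, add_zero, zero_add, sub_zero, eval_add, eval_mul, eval_sub, eval_pow,
      eval_X, eval_C, eval_natCast]
  -- evaluation of the a-product at 1 via the derivative
  have han : a n' = 1 := by
    show Complex.exp (2 * (Real.pi : ℂ) * Complex.I * (n' : ℂ) / (n' : ℂ)) = 1
    rw [mul_div_assoc, div_self hnc, mul_one, Complex.exp_two_pi_mul_I]
  have hsplit : Finset.Icc 1 n' = insert n' (Finset.Icc 1 (n' - 1)) := by
    ext x
    simp only [Finset.mem_Icc, Finset.mem_insert]
    omega
  have hnm : n' ∉ Finset.Icc 1 (n' - 1) := by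
    simp only [Finset.mem_Icc]
    omega
  have hQ : ∏ k ∈ Finset.Icc 1 (n' - 1), (1 - a k) = (n' : ℂ) := by
    have h1 := hA
    rw [hsplit, Finset.prod_insert hnm, han] at h1
    have h2 := congrArg (fun p => Polynomial.eval 1 (derivative p)) h1
    simp only [derivative_mul, derivative_sub, derivative_X, derivative_C, derivative_X_pow,
      derivative_one, eval_add, eval_mul, eval_sub, eval_one, eval_X, eval_C, eval_pow,
      eval_natCast, eval_prod, sub_self, zero_mul, mul_zero, zero_add, add_zero, sub_zero,
      one_mul, mul_one, one_pow] at h2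
    exact h2
  have hQabs : ∏ k ∈ Finset.Icc 1 (n' - 1), ‖(1 - a k)‖ = (n' : ℝ) := by
    have h := congrArg (‖·‖) hQ
    rwa [norm_prod, Complex.norm_natCast] at h
  have hPβ : ∏ k ∈ Finset.Icc 1 n', (1 - b k) = 1 - ω := by
    have h := congrArg (Polynomial.eval 1) hB
    simpa [eval_prod] using h
  set s : ℝ := ‖(1 - ω)‖ with hs
  have hPβabs : ∏ k ∈ Finset.Icc 1 n', ‖(1 - b k)‖ = s := by
    rw [← norm_prod, hPβ]
  have hsinβ : 0 < Real.sin (Real.pi * β) :=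
    Real.sin_pos_of_pos_of_lt_pi (by positivity) (by nlinarith [Real.pi_pos])
  have hωval : s = 2 * Real.sin (Real.pi * β) := by
    have h : 2 * (Real.pi : ℂ) * Complex.I * (β : ℂ)
        = ((2 * Real.pi * β : ℝ) : ℂ) * Complex.I := by push_cast; ring
    rw [hs, hω, h, UMC_absG, show 2 * Real.pi * β / 2 = Real.pi * β by ring,
      _root_.abs_of_pos (by positivity)]
  have hspos : 0 < s := by rw [hωval]; positivity
  have hsne : s ≠ 0 := ne_of_gt hspos
  have hnr : (n' : ℝ) ≠ 0 := Nat.cast_ne_zero.mpr hn0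
  have e1 : |c1| = ((n' : ℝ))⁻¹ := by
    rw [hc1, Finset.abs_prod]
    rw [show ∏ k ∈ Finset.Icc 1 (n' - 1), |(2 * Real.sin (Real.pi * k / n'))⁻¹|
        = ∏ k ∈ Finset.Icc 1 (n' - 1), (‖(1 - a k)‖)⁻¹ from
      Finset.prod_congr rfl fun k _ => by rw [abs_inv, UMC_absA_nat]]
    rw [Finset.prod_inv_distrib, hQabs]
  have e2 : |c2| = s⁻¹ := by
    rw [hc2, Finset.abs_prod]
    rw [show ∏ k ∈ Finset.Icc 1 n', |(2 * Real.sin (Real.pi * (k + β) / n'))⁻¹|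
        = ∏ k ∈ Finset.Icc 1 n', (‖(1 - b k)‖)⁻¹ from
      Finset.prod_congr rfl fun k _ => by rw [abs_inv, UMC_absB_nat]]
    rw [Finset.prod_inv_distrib, hPβabs]
  have hcabs : ‖((c1 : ℂ) * (c2 : ℂ))‖ = (n' : ℝ)⁻¹ * s⁻¹ := by
    rw [norm_mul, Complex.norm_real, Complex.norm_real, Real.norm_eq_abs, Real.norm_eq_abs, e1, e2]
  intro k hk
  constructor
  · -- at a k
    have hξn : a k ^ n' = 1 := by
      rw [ha, ← Complex.exp_nat_mul]
      have e : (n' : ℂ) * (2 * (Real.pi : ℂ) * Complex.I * (k : ℂ) / n')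
          = ((k : ℤ) : ℂ) * (2 * (Real.pi : ℂ) * Complex.I) := by
        push_cast
        field_simp
      rw [e, Complex.exp_int_mul_two_pi_mul_I]
    have hξabs : ‖(a k)‖ = 1 := by
      show ‖(Complex.exp (2 * (Real.pi : ℂ) * Complex.I * (k : ℂ) / (n' : ℂ)))‖ = 1
      rw [show 2 * (Real.pi : ℂ) * Complex.I * (k : ℂ) / n'
          = ((2 * Real.pi * k / n' : ℝ) : ℂ) * Complex.I by push_cast; ring]
      exact Complex.norm_exp_ofReal_mul_I _
    rw [show Complex.exp (2 * (Real.pi : ℂ) * Complex.I * (k : ℂ) / (n' : ℂ)) = a k from rfl,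
      heval (a k), hξn]
    rw [show ((c1 : ℂ) * (c2 : ℂ)) *
        ((n' : ℂ) * a k ^ (n' - 1) * (1 - ω) + (1 - 1) * ((n' : ℂ) * a k ^ (n' - 1)))
        = ((c1 : ℂ) * (c2 : ℂ)) * ((n' : ℂ) * a k ^ (n' - 1) * (1 - ω)) by ring]
    rw [norm_mul, hcabs, norm_mul, norm_mul, norm_pow, hξabs, Complex.norm_natCast, one_pow, ← hs]
    field_simp
  · -- at b k
    have hξn : b k ^ n' = ω := by
      rw [hb, hω, ← Complex.exp_nat_mul]
      have e : (n' : ℂ) * (2 * (Real.pi : ℂ) * Complex.I * ((k : ℂ) + (β : ℂ)) / n')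
          = ((k : ℤ) : ℂ) * (2 * (Real.pi : ℂ) * Complex.I)
            + 2 * (Real.pi : ℂ) * Complex.I * (β : ℂ) := by
        push_cast
        field_simp
      rw [e, Complex.exp_add, Complex.exp_int_mul_two_pi_mul_I, one_mul]
    have hξabs : ‖(b k)‖ = 1 := by
      show ‖(Complex.exp
        (2 * (Real.pi : ℂ) * Complex.I * ((k : ℂ) + (β : ℂ)) / (n' : ℂ)))‖ = 1
      rw [show 2 * (Real.pi : ℂ) * Complex.I * ((k : ℂ) + (β : ℂ)) / n'
          = ((2 * Real.pi * ((k : ℝ) + β) / n' : ℝ) : ℂ) * Complex.I by push_cast; ring]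
      exact Complex.norm_exp_ofReal_mul_I _
    rw [show Complex.exp (2 * (Real.pi : ℂ) * Complex.I * ((k : ℂ) + (β : ℂ)) / (n' : ℂ)) = b k
        from rfl,
      heval (b k), hξn]
    rw [show ((c1 : ℂ) * (c2 : ℂ)) *
        ((n' : ℂ) * b k ^ (n' - 1) * (ω - ω) + (ω - 1) * ((n' : ℂ) * b k ^ (n' - 1)))
        = -(((c1 : ℂ) * (c2 : ℂ)) * ((n' : ℂ) * b k ^ (n' - 1) * (1 - ω))) by ring]
    rw [norm_neg, norm_mul, hcabs, norm_mul, norm_mul, norm_pow, hξabs, Complex.norm_natCast,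
      one_pow, ← hs]
    field_simp
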